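/- Under Assumption 2, for every k ≥ 1 the IN method satisfies ‖∇f(x_1^k) − h_m^k‖ ≤ C(1 + 1/α^k)·Σ_{j=2}^m ‖x_j^k − x_1^k‖, where h_m^k = Σ_{j=1}^m ( ∇f_j(x_j^k) + (1/α^k)∇²f_j(x_j^k)(x_1^k − x_j^k) ). -/

import Mathlib

open Finset Filter Classical
open scoped Matrix

private lemma dot_key {n : ℕ} (A : Matrix (Fin n) (Fin n) ℝ) (C : ℝ) (hC : 0 ≤ C)
    (hsymm : ∀ a b : Fin n → ℝ, a ⬝ᵥ (A *ᵥ b) = b ⬝ᵥ (A *ᵥ a))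
    (hpsd : ∀ a : Fin n → ℝ, 0 ≤ a ⬝ᵥ (A *ᵥ a))
    (hdiag : ∀ a : Fin n → ℝ, a ⬝ᵥ (A *ᵥ a) ≤ C * (a ⬝ᵥ a)) :
    ∀ u : Fin n → ℝ, (A *ᵥ u) ⬝ᵥ (A *ᵥ u) ≤ C^2 * (u ⬝ᵥ u) := by
  intro u
  set w := A *ᵥ u with hw
  have hCS : (u ⬝ᵥ (A *ᵥ w))^2 ≤ (u ⬝ᵥ (A *ᵥ u)) * (w ⬝ᵥ (A *ᵥ w)) := by
    have hq : ∀ t : ℝ, 0 ≤ (w ⬝ᵥ (A *ᵥ w)) * (t*t) + (2 * (u ⬝ᵥ (A *ᵥ w))) * t + (u ⬝ᵥ (A *ᵥ u)) := by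
      intro t
      have h := hpsd (u + t • w)
      have hexp : (u + t • w) ⬝ᵥ (A *ᵥ (u + t • w)) =
          (w ⬝ᵥ (A *ᵥ w)) * (t*t) + (2 * (u ⬝ᵥ (A *ᵥ w))) * t + (u ⬝ᵥ (A *ᵥ u)) := by
        have hs := hsymm w u
        simp only [Matrix.mulVec_add, Matrix.mulVec_smul, dotProduct_add,
          add_dotProduct, dotProduct_smul, smul_dotProduct, smul_eq_mul]
        rw [hs]; ring
      linarith [hexp ▸ h]
    have hd := discrim_le_zero hq
    rw [discrim] at hd
    nlinarith
  have hN : w ⬝ᵥ w = u ⬝ᵥ (A *ᵥ w) := by rw [hsymm u w]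
  have hNnn : 0 ≤ w ⬝ᵥ w := by
    rw [dotProduct]; exact Finset.sum_nonneg fun i _ => mul_self_nonneg (w i)
  have huu : 0 ≤ u ⬝ᵥ u := by
    rw [dotProduct]; exact Finset.sum_nonneg fun i _ => mul_self_nonneg (u i)
  have h1 := hdiag u
  have h2 := hdiag w
  rcases eq_or_lt_of_le hNnn with h0 | h0
  · rw [← h0]; positivity
  · have h3 : (u ⬝ᵥ (A *ᵥ u)) * (w ⬝ᵥ (A *ᵥ w)) ≤ (C * (u ⬝ᵥ u)) * (C * (w ⬝ᵥ w)) :=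
      mul_le_mul h1 h2 (hpsd w) (by positivity)
    have h4 : (w ⬝ᵥ w) * (w ⬝ᵥ w) ≤ (C^2 * (u ⬝ᵥ u)) * (w ⬝ᵥ w) := by nlinarith [hCS, hN]
    exact le_of_mul_le_mul_right h4 h0

private lemma clm_bound {n : ℕ} (A : Matrix (Fin n) (Fin n) ℝ) (c C : ℝ) (hc : 0 < c) (hcC : c ≤ C)
    (hlb : (A - c • 1).PosSemidef)
    (hub : (C • (1 : Matrix (Fin n) (Fin n) ℝ) - A).PosSemidef) :
    ‖Matrix.toEuclideanCLM (𝕜 := ℝ) A‖ ≤ C := by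
  have hC : 0 ≤ C := le_trans hc.le hcC
  -- hermitian implies symmetry of the bilinear form
  have hAt : Aᵀ = A := by
    have h1 := hlb.1
    rw [Matrix.IsHermitian, Matrix.conjTranspose_eq_transpose_of_trivial, Matrix.transpose_sub,
      Matrix.transpose_smul, Matrix.transpose_one] at h1
    exact sub_left_inj.mp h1
  have hsymm : ∀ a b : Fin n → ℝ, a ⬝ᵥ (A *ᵥ b) = b ⬝ᵥ (A *ᵥ a) := by
    intro a b
    calc a ⬝ᵥ (A *ᵥ b) = (a ᵥ* A) ⬝ᵥ b := Matrix.dotProduct_mulVec a A b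
      _ = (Aᵀ *ᵥ a) ⬝ᵥ b := by rw [Matrix.mulVec_transpose]
      _ = (A *ᵥ a) ⬝ᵥ b := by rw [hAt]
      _ = b ⬝ᵥ (A *ᵥ a) := dotProduct_comm _ _
  have hdotself : ∀ a : Fin n → ℝ, 0 ≤ a ⬝ᵥ a := by
    intro a
    rw [dotProduct]; exact Finset.sum_nonneg fun i _ => mul_self_nonneg (a i)
  have hpsd : ∀ a : Fin n → ℝ, 0 ≤ a ⬝ᵥ (A *ᵥ a) := by
    intro a
    have h := hlb.dotProduct_mulVec_nonneg a
    simp only [star_trivial, Matrix.sub_mulVec, Matrix.smul_mulVec, Matrix.one_mulVec,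
      dotProduct_sub, dotProduct_smul, smul_eq_mul] at h
    have := hdotself a
    nlinarith
  have hdiag : ∀ a : Fin n → ℝ, a ⬝ᵥ (A *ᵥ a) ≤ C * (a ⬝ᵥ a) := by
    intro a
    have h := hub.dotProduct_mulVec_nonneg a
    simp only [star_trivial, Matrix.sub_mulVec, Matrix.smul_mulVec, Matrix.one_mulVec,
      dotProduct_sub, dotProduct_smul, smul_eq_mul] at h
    linarith
  have key := dot_key A C hC hsymm hpsd hdiag
  apply ContinuousLinearMap.opNorm_le_bound _ hC
  intro v
  have hnorm : ∀ w : EuclideanSpace ℝ (Fin n), ‖w‖^2 = (WithLp.equiv 2 _ w) ⬝ᵥ (WithLp.equiv 2 _ w) := by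
    intro w
    rw [← real_inner_self_eq_norm_sq]
    simp only [PiLp.inner_apply, RCLike.inner_apply, starRingEnd_apply, star_trivial,
      dotProduct]
    rfl
  have happ : WithLp.equiv 2 _ ((Matrix.toEuclideanCLM (𝕜 := ℝ) A) v) =
      A *ᵥ (WithLp.equiv 2 _ v) := by
    exact Matrix.ofLp_toEuclideanCLM A v
  have hsq : ‖(Matrix.toEuclideanCLM (𝕜 := ℝ) A) v‖^2 ≤ (C * ‖v‖)^2 := by
    rw [hnorm ((Matrix.toEuclideanCLM (𝕜 := ℝ) A) v), happ, mul_pow, hnorm v]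
    exact key _
  have h1 : 0 ≤ ‖(Matrix.toEuclideanCLM (𝕜 := ℝ) A) v‖ := norm_nonneg _
  have h2 : 0 ≤ C * ‖v‖ := by positivity
  nlinarith [hsq, h1, h2]

theorem statement15
    (n m : ℕ) (hm : 1 < m)
    (f : ℕ → EuclideanSpace ℝ (Fin n) → ℝ)
    (g : ℕ → EuclideanSpace ℝ (Fin n) → EuclideanSpace ℝ (Fin n))
    (hess : ℕ → EuclideanSpace ℝ (Fin n) → Matrix (Fin n) (Fin n) ℝ)
    (hgrad : ∀ i ∈ Finset.Icc 1 m, ∀ y, HasGradientAt (f i) (g i y) y)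
    (hhess : ∀ i ∈ Finset.Icc 1 m, ∀ y, HasFDerivAt (g i) (Matrix.toEuclideanCLM (𝕜 := ℝ) (hess i y)) y)
    (hcont : ∀ i ∈ Finset.Icc 1 m, Continuous (hess i))
    (α : ℕ → ℝ) (hα : ∀ k, 1 ≤ k → 0 < α k)
    (x : ℕ → ℕ → EuclideanSpace ℝ (Fin n))
    (H : ℕ → ℕ → Matrix (Fin n) (Fin n) ℝ)
    (hH0 : H 1 0 = 0)
    (hHnext : ∀ k, 1 ≤ k → H (k+1) 0 = H k m)
    (hHrec : ∀ k, 1 ≤ k → ∀ i ∈ Finset.Icc 1 m, H k i = H k (i-1) + hess i (x k i))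
    (hxnext : ∀ k, 1 ≤ k → x (k+1) 1 = x k (m+1))
    (hiter : ∀ k, 1 ≤ k → ∀ i ∈ Finset.Icc 1 m,
      x k (i+1) = x k i - α k • (Matrix.toEuclideanCLM (𝕜 := ℝ) (H k i)⁻¹) (g i (x k i)))
    (c C : ℝ) (hc : 0 < c) (hcC : c ≤ C)
    (hlb : ∀ i ∈ Finset.Icc 1 m, ∀ y, (hess i y - c • 1).PosSemidef)
    (hub : ∀ i ∈ Finset.Icc 1 m, ∀ y, (C • (1 : Matrix (Fin n) (Fin n) ℝ) - hess i y).PosSemidef)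
 :
    ∀ k, 1 ≤ k →
      ‖(∑ i ∈ Finset.Icc 1 m, g i (x k 1)) -
          ∑ j ∈ Finset.Icc 1 m, (g j (x k j)
            + (α k)⁻¹ • (Matrix.toEuclideanCLM (𝕜 := ℝ) (hess j (x k j))) (x k 1 - x k j))‖ ≤
        C * (1 + 1/α k) * ∑ j ∈ Finset.Icc 2 m, ‖x k j - x k 1‖ := by
  intro k hk
  have hC : 0 ≤ C := hc.le.trans hcC
  have hαk : 0 < α k := hα k hk
  have hTnorm : ∀ j ∈ Finset.Icc 1 m, ∀ y, ‖Matrix.toEuclideanCLM (𝕜 := ℝ) (hess j y)‖ ≤ C :=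
    fun j hj y => clm_bound _ c C hc hcC (hlb j hj y) (hub j hj y)
  have hlip : ∀ j ∈ Finset.Icc 1 m, ∀ a b : EuclideanSpace ℝ (Fin n),
      ‖g j a - g j b‖ ≤ C * ‖a - b‖ := by
    intro j hj a b
    exact Convex.norm_image_sub_le_of_norm_hasFDerivWithin_le
      (fun y _ => (hhess j hj y).hasFDerivWithinAt)
      (fun y _ => hTnorm j hj y) convex_univ (Set.mem_univ b) (Set.mem_univ a)
  set a := x k 1 with ha
  set T : ℕ → EuclideanSpace ℝ (Fin n) →L[ℝ] EuclideanSpace ℝ (Fin n) :=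
    fun j => Matrix.toEuclideanCLM (𝕜 := ℝ) (hess j (x k j)) with hT
  have hsplit : (∑ i ∈ Finset.Icc 1 m, g i a) -
      ∑ j ∈ Finset.Icc 1 m, (g j (x k j) + (α k)⁻¹ • (T j) (a - x k j)) =
      ∑ j ∈ Finset.Icc 1 m, (g j a - (g j (x k j) + (α k)⁻¹ • (T j) (a - x k j))) :=
    (Finset.sum_sub_distrib _ _).symm
  have hIcc : Finset.Icc 1 m = insert 1 (Finset.Icc 2 m) := by
    ext j; simp only [Finset.mem_Icc, Finset.mem_insert]; omega
  have h1notin : 1 ∉ Finset.Icc 2 m := by simp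
  rw [hsplit, hIcc, Finset.sum_insert h1notin]
  have hterm1 : g 1 a - (g 1 (x k 1) + (α k)⁻¹ • (T 1) (a - x k 1)) = 0 := by
    rw [← ha, sub_self, map_zero, smul_zero, add_zero, sub_self]
  rw [hterm1, zero_add]
  calc ‖∑ j ∈ Finset.Icc 2 m, (g j a - (g j (x k j) + (α k)⁻¹ • (T j) (a - x k j)))‖
      ≤ ∑ j ∈ Finset.Icc 2 m, ‖g j a - (g j (x k j) + (α k)⁻¹ • (T j) (a - x k j))‖ :=
        norm_sum_le _ _
    _ ≤ ∑ j ∈ Finset.Icc 2 m, C * (1 + 1/α k) * ‖x k j - a‖ := by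
        apply Finset.sum_le_sum
        intro j hj
        have hj' : j ∈ Finset.Icc 1 m := by
          simp only [Finset.mem_Icc] at hj ⊢; omega
        have h1 : ‖g j a - g j (x k j)‖ ≤ C * ‖x k j - a‖ := by
          rw [norm_sub_rev (x k j) a]
          exact hlip j hj' a (x k j)
        have h2 : ‖(α k)⁻¹ • (T j) (a - x k j)‖ ≤ (α k)⁻¹ * (C * ‖x k j - a‖) := by
          rw [norm_smul, Real.norm_eq_abs, abs_of_pos (inv_pos.mpr hαk)]
          apply mul_le_mul_of_nonneg_left _ (inv_pos.mpr hαk).le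
          calc ‖(T j) (a - x k j)‖ ≤ ‖T j‖ * ‖a - x k j‖ := (T j).le_opNorm _
            _ ≤ C * ‖a - x k j‖ :=
              mul_le_mul_of_nonneg_right (hTnorm j hj' (x k j)) (norm_nonneg _)
            _ = C * ‖x k j - a‖ := by rw [norm_sub_rev]
        calc ‖g j a - (g j (x k j) + (α k)⁻¹ • (T j) (a - x k j))‖
            = ‖(g j a - g j (x k j)) - (α k)⁻¹ • (T j) (a - x k j)‖ := by
              rw [sub_add_eq_sub_sub]
          _ ≤ ‖g j a - g j (x k j)‖ + ‖(α k)⁻¹ • (T j) (a - x k j)‖ := norm_sub_le _ _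
          _ ≤ C * ‖x k j - a‖ + (α k)⁻¹ * (C * ‖x k j - a‖) := add_le_add h1 h2
          _ = C * (1 + 1/α k) * ‖x k j - a‖ := by rw [one_div]; ring
    _ = C * (1 + 1/α k) * ∑ j ∈ Finset.Icc 2 m, ‖x k j - a‖ := (Finset.mul_sum _ _ _).symm
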